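/- Let h be holomorphic on an open set in ℂᵐ, nowhere vanishing there, satisfying Σᵢⱼ conj(∂²h/∂zᵢ∂zⱼ)(∂h/∂zᵢ)(∂h/∂zⱼ) = μ·h with μ real-valued, and let r ∈ ℤ. Then H := hʳ satisfies Σᵢⱼ conj(∂²H/∂zᵢ∂zⱼ)(∂H/∂zᵢ)(∂H/∂zⱼ) = μ₁·H with the real-valued function μ₁ = r³((r-1)|h|^{2r-4}|∇h|⁴ + μ|h|^{2r-2}), where |∇h|² = Σᵢ|∂h/∂zᵢ|². -/

import Mathlib

open Complex

/-- Powers of ℝ-holomorphic functions: if `h` is holomorphic and nonvanishing on the open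
set `Ω ⊆ ℂᵐ` with `Σᵢⱼ conj(h''_{zᵢzⱼ}) h'_{zᵢ} h'_{zⱼ} = μ h` (`μ` real-valued), and
`r ∈ ℤ`, then `H = hʳ` satisfies the same identity with the real-valued multiplier
`μ₁ = r³ ((r-1) |h|^{2r-4} |∇h|⁴ + μ |h|^{2r-2})`. -/
theorem stmt_7 (m : ℕ) (Ω : Set (Fin m → ℂ)) (hΩ : IsOpen Ω)
    (h : (Fin m → ℂ) → ℂ)
    (hdiff : ∀ z ∈ Ω, DifferentiableAt ℂ h z)
    (hdiff2 : ∀ z ∈ Ω, DifferentiableAt ℂ (fun z' => fderiv ℂ h z') z)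
    (hne : ∀ z ∈ Ω, h z ≠ 0)
    (μ : (Fin m → ℂ) → ℝ)
    (hμ : ∀ z ∈ Ω, ∑ i : Fin m, ∑ j : Fin m,
        (starRingEnd ℂ) (fderiv ℂ (fun z' => fderiv ℂ h z' (Pi.single i 1)) z (Pi.single j 1))
          * fderiv ℂ h z (Pi.single i 1) * fderiv ℂ h z (Pi.single j 1)
        = (μ z : ℂ) * h z)
    (r : ℤ) :
    ∀ z ∈ Ω,
      (let H : (Fin m → ℂ) → ℂ := fun z' => h z' ^ r
       let gradsq : ℝ := ∑ i : Fin m, ‖fderiv ℂ h z (Pi.single i 1)‖ ^ 2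
       let μ₁ : ℝ := (r : ℝ) ^ 3 * (((r : ℝ) - 1) * ‖h z‖ ^ (2 * (r : ℝ) - 4)
            * gradsq ^ 2 + μ z * ‖h z‖ ^ (2 * (r : ℝ) - 2))
       ∑ i : Fin m, ∑ j : Fin m,
          (starRingEnd ℂ) (fderiv ℂ (fun z' => fderiv ℂ H z' (Pi.single i 1)) z (Pi.single j 1))
            * fderiv ℂ H z (Pi.single i 1) * fderiv ℂ H z (Pi.single j 1)
        = (μ₁ : ℂ) * H z) := by
  intro z hz
  dsimp only
  have ha0 : h z ≠ 0 := hne z hz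
  set a : ℂ := h z with ha
  set c : Fin m → ℂ := fun i => fderiv ℂ h z (Pi.single i 1) with hc
  set d : Fin m → Fin m → ℂ :=
    fun i j => fderiv ℂ (fun z' => fderiv ℂ h z' (Pi.single i 1)) z (Pi.single j 1) with hd
  -- first derivative of H on Ω
  have key1 : ∀ w ∈ Ω, HasFDerivAt (fun z' => h z' ^ r)
      (((r : ℂ) * h w ^ (r - 1)) • fderiv ℂ h w) w := by
    intro w hw
    exact (hasDerivAt_zpow r (h w) (Or.inl (hne w hw))).comp_hasFDerivAt w
      (hdiff w hw).hasFDerivAt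
  have hH1 : ∀ i, fderiv ℂ (fun z' => h z' ^ r) z (Pi.single i 1)
      = (r : ℂ) * a ^ (r - 1) * c i := by
    intro i
    rw [(key1 z hz).fderiv]
    simp [c, a, smul_eq_mul]
  -- second derivative
  have hH2 : ∀ i j,
      fderiv ℂ (fun z' => fderiv ℂ (fun z'' => h z'' ^ r) z' (Pi.single i 1)) z (Pi.single j 1)
      = (r : ℂ) * (((r : ℂ) - 1) * a ^ (r - 2)) * c j * c i
        + (r : ℂ) * a ^ (r - 1) * d i j := by
    intro i j
    have hφ : DifferentiableAt ℂ (fun z' => fderiv ℂ h z' (Pi.single i 1)) z :=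
      (hdiff2 z hz).clm_apply (differentiableAt_const _)
    have hu : HasFDerivAt (fun z' => (r : ℂ) * h z' ^ (r - 1))
        (((r : ℂ) * (((r : ℂ) - 1) * a ^ (r - 1 - 1))) • fderiv ℂ h z) z := by
      have := (((hasDerivAt_zpow (r - 1) (h z) (Or.inl ha0)).const_mul
        ((r : ℂ))).comp_hasFDerivAt z (hdiff z hz).hasFDerivAt)
      rw [Int.cast_sub, Int.cast_one] at this
      exact this
    have hev : (fun z' => fderiv ℂ (fun z'' => h z'' ^ r) z' (Pi.single i 1))
        =ᶠ[nhds z] fun z' => ((r : ℂ) * h z' ^ (r - 1)) * fderiv ℂ h z' (Pi.single i 1) := by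
      filter_upwards [hΩ.mem_nhds hz] with w hw
      rw [(key1 w hw).fderiv]
      simp [smul_eq_mul]
    rw [hev.fderiv_eq, (hu.fun_mul hφ.hasFDerivAt).fderiv]
    have h12 : r - 1 - 1 = r - 2 := by ring
    simp only [ContinuousLinearMap.add_apply, ContinuousLinearMap.smul_apply, smul_eq_mul, h12]
    ring
  simp only [hH1, hH2]
  set A : ℂ := (r : ℂ) * (((r : ℂ) - 1) * a ^ (r - 2)) with hA
  set B : ℂ := (r : ℂ) * a ^ (r - 1) with hB
  have conjmul : ∀ w : ℂ, (starRingEnd ℂ) w * w = ((‖w‖ : ℝ) : ℂ) ^ 2 := by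
    intro w
    rw [mul_comm, Complex.mul_conj']
  have expand : ∀ i j,
      (starRingEnd ℂ) (A * c j * c i + B * d i j) * (B * c i) * (B * c j)
      = ((starRingEnd ℂ) A * B ^ 2) *
          (((starRingEnd ℂ) (c i) * c i) * ((starRingEnd ℂ) (c j) * c j))
        + (((starRingEnd ℂ) B) * B ^ 2) * ((starRingEnd ℂ) (d i j) * c i * c j) := by
    intro i j
    simp only [map_add, map_mul]
    ring
  rw [Finset.sum_congr rfl fun i _ => Finset.sum_congr rfl fun j _ => expand i j]
  simp only [Finset.sum_add_distrib, ← Finset.mul_sum]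
  have hsum2 : ∑ i : Fin m, ∑ j : Fin m, (starRingEnd ℂ) (d i j) * c i * c j
      = (μ z : ℂ) * a := hμ z hz
  rw [hsum2]
  have hS : ∑ i : Fin m, (starRingEnd ℂ) (c i) * c i
      = ((∑ i : Fin m, ‖fderiv ℂ h z (Pi.single i 1)‖ ^ 2 : ℝ) : ℂ) := by
    push_cast
    exact Finset.sum_congr rfl fun i _ => conjmul (c i)
  rw [hS, ← Finset.sum_mul, hS]
  set G : ℝ := ∑ i : Fin m, ‖fderiv ℂ h z (Pi.single i 1)‖ ^ 2 with hG
  set b : ℂ := (starRingEnd ℂ) a with hb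
  have hcA : (starRingEnd ℂ) A = (r : ℂ) * (((r : ℂ) - 1) * b ^ (r - 2)) := by
    simp [hA, hb, map_zpow₀]
  have hcB : (starRingEnd ℂ) B = (r : ℂ) * b ^ (r - 1) := by
    simp [hB, hb, map_zpow₀]
  have hr1 : ‖a‖ ^ (2 * (r : ℝ) - 4) = ‖a‖ ^ (2 * (r - 2) : ℤ) := by
    rw [← Real.rpow_intCast ‖a‖ (2 * (r - 2))]
    congr 1
    push_cast
    ring
  have hr2 : ‖a‖ ^ (2 * (r : ℝ) - 2) = ‖a‖ ^ (2 * (r - 1) : ℤ) := by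
    rw [← Real.rpow_intCast ‖a‖ (2 * (r - 1))]
    congr 1
    push_cast
    ring
  rw [hcA, hcB, hr1, hr2]
  push_cast [Complex.ofReal_zpow]
  have hk2 : ((‖a‖ : ℝ) : ℂ) ^ (2 : ℤ) = b * a := by
    rw [show ((‖a‖ : ℝ) : ℂ) ^ (2 : ℤ) = ((‖a‖ : ℝ) : ℂ) ^ (2 : ℕ) by
      norm_cast]
    exact (conjmul a).symm
  have hk : ∀ k : ℤ, ((‖a‖ : ℝ) : ℂ) ^ (2 * k) = b ^ k * a ^ k := by
    intro k
    rw [zpow_mul, hk2, mul_zpow]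
  rw [hk, hk]
  have ea1 : a ^ (r - 1) * a ^ (r - 1) = a ^ (r - 2) * a ^ r := by
    rw [← zpow_add₀ ha0, ← zpow_add₀ ha0]
    ring_nf
  have ea2 : a ^ (r - 1) * a ^ (r - 1) * a = a ^ (r - 1) * a ^ r := by
    rw [mul_assoc, ← zpow_add_one₀ ha0, show r - 1 + 1 = r by ring]
  linear_combination ((r : ℂ) ^ 3 * ((r : ℂ) - 1) * (G : ℂ) ^ 2 * b ^ (r - 2)) * ea1
    + ((r : ℂ) ^ 3 * (μ z : ℂ) * b ^ (r - 1)) * ea2
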